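/- The elements θ_1(z), …, θ_n(z) pairwise commute: θ_i(z)·θ_j(z) = θ_j(z)·θ_i(z) in ℂ[S_n] for all 1 ≤ i, j ≤ n. -/

import Mathlib

open Finset

/-- The element `θ_i(z) = Σ_{j≠i} (z_i − z_j)⁻¹ s_{ij}` of the group algebra `ℂ[S_n]`. -/
noncomputable def theta (n : ℕ) (z : Fin n → ℂ) (i : Fin n) :
    MonoidAlgebra ℂ (Equiv.Perm (Fin n)) :=
  ∑ j ∈ Finset.univ.erase i, MonoidAlgebra.single (Equiv.swap i j) ((z i - z j)⁻¹)

lemma swap_disj_comm {α} [DecidableEq α] {a b c d : α} (h1 : a ≠ c) (h2 : a ≠ d)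
    (h3 : b ≠ c) (h4 : b ≠ d) :
    Equiv.swap a b * Equiv.swap c d = Equiv.swap c d * Equiv.swap a b := by
  ext x
  simp only [Equiv.Perm.mul_apply, Equiv.swap_apply_def]
  split_ifs <;> simp_all

lemma swap_id1 {α} [DecidableEq α] {a b c : α} (hab : a ≠ b) (hac : a ≠ c) (hbc : b ≠ c) :
    Equiv.swap a c * Equiv.swap a b = Equiv.swap a b * Equiv.swap b c := by
  ext x
  simp only [Equiv.Perm.mul_apply, Equiv.swap_apply_def]
  split_ifs <;> simp_all

lemma swap_id2 {α} [DecidableEq α] {a b c : α} (hab : a ≠ b) (hac : a ≠ c) (hbc : b ≠ c) :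
    Equiv.swap a b * Equiv.swap a c = Equiv.swap b c * Equiv.swap a b := by
  ext x
  simp only [Equiv.Perm.mul_apply, Equiv.swap_apply_def]
  split_ifs <;> simp_all

lemma swap_id3 {α} [DecidableEq α] {a b c : α} (hab : a ≠ b) (hac : a ≠ c) (hbc : b ≠ c) :
    Equiv.swap a c * Equiv.swap b c = Equiv.swap b c * Equiv.swap a b := by
  ext x
  simp only [Equiv.Perm.mul_apply, Equiv.swap_apply_def]
  split_ifs <;> simp_all

lemma swap_id4 {α} [DecidableEq α] {a b c : α} (hab : a ≠ b) (hac : a ≠ c) (hbc : b ≠ c) :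
    Equiv.swap b c * Equiv.swap a c = Equiv.swap a b * Equiv.swap b c := by
  ext x
  simp only [Equiv.Perm.mul_apply, Equiv.swap_apply_def]
  split_ifs <;> simp_all

lemma scalar_id {A B C : ℂ} (h1 : A ≠ B) (h2 : A ≠ C) (h3 : B ≠ C) :
    (A - B)⁻¹ * (B - C)⁻¹ + (A - C)⁻¹ * (B - A)⁻¹ = (A - C)⁻¹ * (B - C)⁻¹ := by
  have k1 : A - B ≠ 0 := sub_ne_zero.mpr h1
  have k2 : A - C ≠ 0 := sub_ne_zero.mpr h2
  have k3 : B - C ≠ 0 := sub_ne_zero.mpr h3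
  have k4 : B - A ≠ 0 := sub_ne_zero.mpr h1.symm
  field_simp
  ring

lemma erase_erase_comm {α} [DecidableEq α] (s : Finset α) (a b : α) :
    (s.erase a).erase b = (s.erase b).erase a := by
  ext x; simp only [Finset.mem_erase]; tauto

lemma offdiag_comm {α β} [DecidableEq α] [AddCommMonoid β] (M : Finset α)
    (f : α → α → β) :
    ∑ x ∈ M, ∑ y ∈ M.erase x, f x y = ∑ y ∈ M, ∑ x ∈ M.erase y, f x y := by
  have h : ∀ g : α → α → β, ∑ x ∈ M, ∑ y ∈ M.erase x, g x y
      = ∑ x ∈ M, ∑ y ∈ M, if y ≠ x then g x y else 0 := by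
    intro g
    refine Finset.sum_congr rfl fun x _ => ?_
    rw [← Finset.sum_filter, Finset.filter_ne']
  rw [h f, h (fun y x => f x y)]
  refine Eq.trans Finset.sum_comm ?_
  refine Finset.sum_congr rfl fun y _ => Finset.sum_congr rfl fun x _ => ?_
  rcases eq_or_ne x y with h | h
  · simp [h]
  · simp [h, h.symm]

/-- the elements `θ_1(z), …, θ_n(z)` pairwise commute in `ℂ[S_n]`. -/
theorem theta_pairwise_commute (n : ℕ) (z : Fin n → ℂ)
    (hz : Function.Injective z) (i j : Fin n) :
    theta n z i * theta n z j = theta n z j * theta n z i := by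
  by_cases hij : i = j
  · subst hij; rfl
  set M : Finset (Fin n) := (Finset.univ.erase i).erase j with hM
  have hMmem : ∀ m ∈ M, m ≠ i ∧ m ≠ j := by
    intro m hm
    simp only [hM, Finset.mem_erase] at hm
    exact ⟨hm.2.1, hm.1⟩
  set a : Fin n → ℂ := fun m => (z i - z m)⁻¹ with ha
  set b : Fin n → ℂ := fun m => (z j - z m)⁻¹ with hb
  set A : ℂ := (z i - z j)⁻¹ with hA
  set B : ℂ := (z j - z i)⁻¹ with hB
  set T1 : MonoidAlgebra ℂ (Equiv.Perm (Fin n)) :=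
    MonoidAlgebra.single (Equiv.swap i j) A with hT1
  set T2 : MonoidAlgebra ℂ (Equiv.Perm (Fin n)) :=
    MonoidAlgebra.single (Equiv.swap j i) B with hT2
  set U : MonoidAlgebra ℂ (Equiv.Perm (Fin n)) :=
    ∑ m ∈ M, MonoidAlgebra.single (Equiv.swap i m) (a m) with hU
  set V : MonoidAlgebra ℂ (Equiv.Perm (Fin n)) :=
    ∑ m ∈ M, MonoidAlgebra.single (Equiv.swap j m) (b m) with hV
  have hthi : theta n z i = T1 + U := by
    rw [theta, ← Finset.add_sum_erase _ _
      (show j ∈ Finset.univ.erase i from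
        Finset.mem_erase.mpr ⟨Ne.symm hij, Finset.mem_univ j⟩)]
  have hthj : theta n z j = T2 + V := by
    rw [theta, ← Finset.add_sum_erase _ _
      (show i ∈ Finset.univ.erase j from
        Finset.mem_erase.mpr ⟨hij, Finset.mem_univ i⟩)]
    rw [erase_erase_comm]
  have hT12 : T1 * T2 = T2 * T1 := by
    rw [hT1, hT2, MonoidAlgebra.single_mul_single, MonoidAlgebra.single_mul_single,
      Equiv.swap_comm, mul_comm]
  set P : Fin n → Equiv.Perm (Fin n) := fun m => Equiv.swap i j * Equiv.swap j m with hP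
  set Q : Fin n → Equiv.Perm (Fin n) := fun m => Equiv.swap j m * Equiv.swap i j with hQ
  have hT1V : T1 * V = ∑ m ∈ M, MonoidAlgebra.single (P m) (A * b m) := by
    rw [hT1, hV, Finset.mul_sum]
    exact Finset.sum_congr rfl fun m _ => MonoidAlgebra.single_mul_single ..
  have hVT1 : V * T1 = ∑ m ∈ M, MonoidAlgebra.single (Q m) (A * b m) := by
    rw [hT1, hV, Finset.sum_mul]
    refine Finset.sum_congr rfl fun m _ => ?_
    rw [MonoidAlgebra.single_mul_single, mul_comm (b m) A]
  have hUT2 : U * T2 = ∑ m ∈ M, MonoidAlgebra.single (P m) (a m * B) := by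
    rw [hT2, hU, Finset.sum_mul]
    refine Finset.sum_congr rfl fun m hm => ?_
    obtain ⟨hmi, hmj⟩ := hMmem m hm
    rw [MonoidAlgebra.single_mul_single, Equiv.swap_comm j i,
      swap_id1 hij (Ne.symm hmi) (Ne.symm hmj)]
  have hT2U : T2 * U = ∑ m ∈ M, MonoidAlgebra.single (Q m) (a m * B) := by
    rw [hT2, hU, Finset.mul_sum]
    refine Finset.sum_congr rfl fun m hm => ?_
    obtain ⟨hmi, hmj⟩ := hMmem m hm
    rw [MonoidAlgebra.single_mul_single, Equiv.swap_comm j i,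
      swap_id2 hij (Ne.symm hmi) (Ne.symm hmj), mul_comm B (a m)]
  set W : MonoidAlgebra ℂ (Equiv.Perm (Fin n)) :=
    ∑ m ∈ M, ∑ m' ∈ M.erase m,
      MonoidAlgebra.single (Equiv.swap i m * Equiv.swap j m') (a m * b m') with hW
  have hUV : U * V = (∑ m ∈ M, MonoidAlgebra.single (Q m) (a m * b m)) + W := by
    rw [hU, hV, Finset.sum_mul_sum]
    have expand : ∀ m ∈ M, ∀ m' ∈ M,
        MonoidAlgebra.single (Equiv.swap i m) (a m) * MonoidAlgebra.single (Equiv.swap j m') (b m')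
        = MonoidAlgebra.single (Equiv.swap i m * Equiv.swap j m') (a m * b m') :=
      fun m _ m' _ => MonoidAlgebra.single_mul_single ..
    rw [Finset.sum_congr rfl fun m hm => Finset.sum_congr rfl fun m' hm' => expand m hm m' hm']
    rw [Finset.sum_congr rfl fun m (hm : m ∈ M) =>
      (Finset.add_sum_erase M (fun m' => MonoidAlgebra.single
        (Equiv.swap i m * Equiv.swap j m') (a m * b m')) hm).symm]
    rw [Finset.sum_add_distrib, hW]
    congr 1
    refine Finset.sum_congr rfl fun m hm => ?_
    obtain ⟨hmi, hmj⟩ := hMmem m hm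
    rw [swap_id3 hij (Ne.symm hmi) (Ne.symm hmj)]
  have hVU : V * U = (∑ m ∈ M, MonoidAlgebra.single (P m) (a m * b m)) + W := by
    rw [hV, hU, Finset.sum_mul_sum]
    have expand : ∀ m ∈ M, ∀ m' ∈ M,
        MonoidAlgebra.single (Equiv.swap j m) (b m) * MonoidAlgebra.single (Equiv.swap i m') (a m')
        = MonoidAlgebra.single (Equiv.swap j m * Equiv.swap i m') (b m * a m') :=
      fun m _ m' _ => MonoidAlgebra.single_mul_single ..
    rw [Finset.sum_congr rfl fun m hm => Finset.sum_congr rfl fun m' hm' => expand m hm m' hm']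
    rw [Finset.sum_congr rfl fun m (hm : m ∈ M) =>
      (Finset.add_sum_erase M (fun m' => MonoidAlgebra.single
        (Equiv.swap j m * Equiv.swap i m') (b m * a m')) hm).symm]
    rw [Finset.sum_add_distrib]
    congr 1
    · refine Finset.sum_congr rfl fun m hm => ?_
      obtain ⟨hmi, hmj⟩ := hMmem m hm
      rw [swap_id4 hij (Ne.symm hmi) (Ne.symm hmj), mul_comm (b m) (a m)]
    · rw [offdiag_comm M (fun m m' => MonoidAlgebra.single
        (Equiv.swap j m * Equiv.swap i m') (b m * a m')), hW]
      refine Finset.sum_congr rfl fun m hm => Finset.sum_congr rfl fun m' hm' => ?_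
      obtain ⟨hmi, hmj⟩ := hMmem m hm
      obtain ⟨hm'M, hm'ne⟩ : m' ∈ M ∧ m' ≠ m := by
        have := Finset.mem_erase.mp hm'
        exact ⟨this.2, this.1⟩
      obtain ⟨hm'i, hm'j⟩ := hMmem m' hm'M
      rw [← swap_disj_comm hij (Ne.symm hm'i) hmj (Ne.symm hm'ne), mul_comm (b m') (a m)]
  -- per-index scalar cancellation
  have key : ∀ m ∈ M,
      MonoidAlgebra.single (P m) (A * b m) + MonoidAlgebra.single (P m) (a m * B)
        + MonoidAlgebra.single (Q m) (a m * b m)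
      = MonoidAlgebra.single (Q m) (a m * B) + MonoidAlgebra.single (Q m) (A * b m)
        + MonoidAlgebra.single (P m) (a m * b m) := by
    intro m hm
    obtain ⟨hmi, hmj⟩ := hMmem m hm
    have hzij : z i ≠ z j := fun h => hij (hz h)
    have hzim : z i ≠ z m := fun h => hmi (hz h).symm
    have hzjm : z j ≠ z m := fun h => hmj (hz h).symm
    have hs : A * b m + a m * B = a m * b m := scalar_id hzij hzim hzjm
    have e1 : MonoidAlgebra.single (P m) (A * b m) + MonoidAlgebra.single (P m) (a m * B)
        = MonoidAlgebra.single (P m) (a m * b m) := by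
      rw [← hs]; exact (MonoidAlgebra.single_add (P m) _ _).symm
    have e2 : MonoidAlgebra.single (Q m) (a m * B) + MonoidAlgebra.single (Q m) (A * b m)
        = MonoidAlgebra.single (Q m) (a m * b m) := by
      rw [← hs, add_comm (A * b m)]; exact (MonoidAlgebra.single_add (Q m) _ _).symm
    rw [e1, e2, add_comm]
  have keysum :
      (∑ m ∈ M, MonoidAlgebra.single (P m) (A * b m))
        + (∑ m ∈ M, MonoidAlgebra.single (P m) (a m * B))
        + (∑ m ∈ M, MonoidAlgebra.single (Q m) (a m * b m))
      = (∑ m ∈ M, MonoidAlgebra.single (Q m) (a m * B))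
        + (∑ m ∈ M, MonoidAlgebra.single (Q m) (A * b m))
        + (∑ m ∈ M, MonoidAlgebra.single (P m) (a m * b m)) := by
    rw [← Finset.sum_add_distrib, ← Finset.sum_add_distrib,
      ← Finset.sum_add_distrib, ← Finset.sum_add_distrib]
    exact Finset.sum_congr rfl key
  have L : theta n z i * theta n z j
      = T1 * T2 + ((∑ m ∈ M, MonoidAlgebra.single (P m) (A * b m))
        + (∑ m ∈ M, MonoidAlgebra.single (P m) (a m * B))
        + (∑ m ∈ M, MonoidAlgebra.single (Q m) (a m * b m)) + W) := by
    rw [hthi, hthj, add_mul, mul_add, mul_add, hT1V, hUT2, hUV]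
    abel
  have R : theta n z j * theta n z i
      = T1 * T2 + ((∑ m ∈ M, MonoidAlgebra.single (Q m) (a m * B))
        + (∑ m ∈ M, MonoidAlgebra.single (Q m) (A * b m))
        + (∑ m ∈ M, MonoidAlgebra.single (P m) (a m * b m)) + W) := by
    rw [hthi, hthj, add_mul, mul_add, mul_add, hT2U, hVT1, hVU, ← hT12]
    abel
  rw [L, R, keysum]
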